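/- Let X be a perfectly normal topological space. Then every bounded upper semicontinuous function f : X → ℝ is the pointwise limit of a non-increasing sequence of bounded continuous functions; in particular, C*(X) is sequentially dense in ⟨USC*(X), τ_p⟩. -/

import Mathlib

open Set Filter Topology

/-- A bornology in the sense of the paper: a proper ideal of subsets of `X`
(nonempty, downward closed, closed under binary unions, `X ∉ 𝓑`) whose union is `X`. -/
def IsPBornology {X : Type*} (𝓑 : Set (Set X)) : Prop :=
  𝓑.Nonempty ∧ (∀ A B : Set X, A ⊆ B → B ∈ 𝓑 → A ∈ 𝓑) ∧
    (∀ A B : Set X, A ∈ 𝓑 → B ∈ 𝓑 → A ∪ B ∈ 𝓑) ∧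
    (Set.univ : Set X) ∉ 𝓑 ∧ ⋃₀ 𝓑 = Set.univ

/-- `USC*(X)`: bounded upper semicontinuous real functions on `X`. -/
def USCb (X : Type*) [TopologicalSpace X] : Set (X → ℝ) :=
  {f | (∀ a : ℝ, IsOpen {x | f x < a}) ∧ ∃ M : ℝ, ∀ x, |f x| ≤ M}

/-- `C*(X)`: bounded continuous real functions on `X`. -/
def Cb (X : Type*) [TopologicalSpace X] : Set (X → ℝ) :=
  {f | Continuous f ∧ ∃ M : ℝ, ∀ x, |f x| ≤ M}

/-- `C(X)`: continuous real functions on `X`. -/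
def ContFns (X : Type*) [TopologicalSpace X] : Set (X → ℝ) := {f | Continuous f}

/-- Basic `τ_𝓑`-neighborhood `N_{B,ε}(h)`. -/
def Nbhd {X : Type*} (B : Set X) (ε : ℝ) (h : X → ℝ) : Set (X → ℝ) :=
  {f | ∀ x ∈ B, |h x - f x| < ε}

/-- The topology `τ_𝓑` on `ℝ^X` of uniform convergence on members of `𝓑`. -/
def tauB {X : Type*} (𝓑 : Set (Set X)) : TopologicalSpace (X → ℝ) :=
  TopologicalSpace.generateFrom
    {S | ∃ (h : X → ℝ) (B : Set X) (ε : ℝ), B ∈ 𝓑 ∧ 0 < ε ∧ S = Nbhd B ε h}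

/-- The ball `𝔹(B,V)` about `B` of radius an entourage `V`. -/
def UBall {X : Type*} (B : Set X) (V : Set (X × X)) : Set X :=
  {x | ∃ y ∈ B, (x, y) ∈ V}

/-- Basic `τ_𝓑ˢ`-neighborhood `Nˢ_{B,ε}(h)`. -/
def NbhdS {X : Type*} [UniformSpace X] (B : Set X) (ε : ℝ) (h : X → ℝ) : Set (X → ℝ) :=
  {f | ∃ V ∈ uniformity X, ∀ x ∈ UBall B V, |h x - f x| < ε}

/-- The topology `τ_𝓑ˢ` on `ℝ^X`. -/
def tauBs {X : Type*} [UniformSpace X] (𝓑 : Set (Set X)) : TopologicalSpace (X → ℝ) :=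
  TopologicalSpace.generateFrom
    {S | ∃ (h : X → ℝ) (B : Set X) (ε : ℝ), B ∈ 𝓑 ∧ 0 < ε ∧ S = NbhdS B ε h}

/-- The selection principle `S₁(𝒜, ℬ)`. -/
def S1 {α : Type*} (𝒜 ℬ : Set (Set α)) : Prop :=
  ∀ u : ℕ → Set α, (∀ n, u n ∈ 𝒜) → ∃ s : ℕ → α, (∀ n, s n ∈ u n) ∧ Set.range s ∈ ℬ

/-- `𝒰` is an open cover of `X`. -/
def IsOCover {X : Type*} [TopologicalSpace X] (𝒰 : Set (Set X)) : Prop :=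
  (∀ U ∈ 𝒰, IsOpen U) ∧ ⋃₀ 𝒰 = Set.univ

/-- `𝒪(X)`: all open covers of `X`. -/
def OCovers (X : Type*) [TopologicalSpace X] : Set (Set (Set X)) := {𝒰 | IsOCover 𝒰}

/-- `Ω_𝓑(X)`: all open `𝓑`-ω-covers of `X`. -/
def BOmegaCovers {X : Type*} [TopologicalSpace X] (𝓑 : Set (Set X)) : Set (Set (Set X)) :=
  {𝒰 | IsOCover 𝒰 ∧ Set.univ ∉ 𝒰 ∧ ∀ B ∈ 𝓑, ∃ U ∈ 𝒰, B ⊆ U}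

/-- `Γ_𝓑(X)`: all open `𝓑`-γ-covers of `X`. -/
def BGammaCovers {X : Type*} [TopologicalSpace X] (𝓑 : Set (Set X)) : Set (Set (Set X)) :=
  {𝒰 | IsOCover 𝒰 ∧ 𝒰.Infinite ∧ ∀ B ∈ 𝓑, {U ∈ 𝒰 | ¬ B ⊆ U}.Finite}

/-- `Ω^s_𝓑(X)`: all open strong `𝓑`-ω-covers of `X`. -/
def BOmegaSCovers {X : Type*} [UniformSpace X] (𝓑 : Set (Set X)) : Set (Set (Set X)) :=
  {𝒰 | IsOCover 𝒰 ∧ Set.univ ∉ 𝒰 ∧ ∀ B ∈ 𝓑, ∃ U ∈ 𝒰, ∃ V ∈ uniformity X, UBall B V ⊆ U}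

/-- `Γ^s_𝓑(X)`: all open strong `𝓑`-γ-covers of `X`. -/
def BGammaSCovers {X : Type*} [UniformSpace X] (𝓑 : Set (Set X)) : Set (Set (Set X)) :=
  {𝒰 | IsOCover 𝒰 ∧ 𝒰.Infinite ∧
    ∀ B ∈ 𝓑, {U ∈ 𝒰 | ¬ ∃ V ∈ uniformity X, UBall B V ⊆ U}.Finite}

/-- `B` and the complement of `U` are functionally separated. -/
def FunSep {X : Type*} [TopologicalSpace X] (B U : Set X) : Prop :=
  ∃ f : X → ℝ, Continuous f ∧ (∀ x ∈ B, f x = 0) ∧ ∀ x ∈ Uᶜ, f x = 1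

/-- `Ω_{𝓑^f}(X)`: all open functionally separated `𝓑`-ω-covers of `X`. -/
def BfOmegaCovers {X : Type*} [TopologicalSpace X] (𝓑 : Set (Set X)) : Set (Set (Set X)) :=
  {𝒰 | IsOCover 𝒰 ∧ ∀ B ∈ 𝓑, ∃ U ∈ 𝒰, FunSep B U}

/-- `Γ_{𝓑^f}(X)`: all open functionally separated `𝓑`-γ-covers of `X`. -/
def BfGammaCovers {X : Type*} [TopologicalSpace X] (𝓑 : Set (Set X)) : Set (Set (Set X)) :=
  {𝒰 | IsOCover 𝒰 ∧ 𝒰.Infinite ∧ ∀ B ∈ 𝓑, {U ∈ 𝒰 | ¬ FunSep B U}.Finite}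

/-- The bornology `Fin` of finite subsets. -/
def FinB (X : Type*) : Set (Set X) := {B | B.Finite}

/-- `𝒟(H)`: subsets of `H` dense in `H` w.r.t. the topology `t`. -/
def DFam {X : Type*} (t : TopologicalSpace (X → ℝ)) (H : Set (X → ℝ)) : Set (Set (X → ℝ)) :=
  {F | F ⊆ H ∧ H ⊆ @closure _ t F}

/-- `𝒮(H)`: subsets of `H` sequentially dense in `H` w.r.t. the topology `t`. -/
def SFam {X : Type*} (t : TopologicalSpace (X → ℝ)) (H : Set (X → ℝ)) : Set (Set (X → ℝ)) :=
  {F | F ⊆ H ∧ ∀ h ∈ H, ∃ s : ℕ → X → ℝ, (∀ n, s n ∈ F) ∧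
    Filter.Tendsto s Filter.atTop (@nhds _ t h)}

/-- `𝒫(H)`: pointwise dense subsets of `H`. -/
def PFam {X : Type*} (H : Set (X → ℝ)) : Set (Set (X → ℝ)) :=
  {F | F ⊆ H ∧ ∀ h ∈ H, ∀ x : X, h x ∈ closure {y : ℝ | ∃ f ∈ F, f x = y}}

/-- `𝒟↑(H)`: upper dense subsets of `H` w.r.t. the topology `t`. -/
def UpperDenseFam {X : Type*} (t : TopologicalSpace (X → ℝ)) (H : Set (X → ℝ)) :
    Set (Set (X → ℝ)) :=
  {F | F ⊆ H ∧ ∀ f ∈ H, {h | h ∈ H ∧ f ≤ h} ⊆ @closure _ t {h | h ∈ F ∧ f ≤ h ∧ h - f ∈ H}}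

/-- `𝒮↑(H)`: upper sequentially dense subsets of `H` w.r.t. the topology `t`. -/
def UpperSeqDenseFam {X : Type*} (t : TopologicalSpace (X → ℝ)) (H : Set (X → ℝ)) :
    Set (Set (X → ℝ)) :=
  {F | F ⊆ H ∧ ∀ f ∈ H, ∃ s : ℕ → X → ℝ,
    (∀ n, s n ∈ F ∧ f ≤ s n ∧ s n - f ∈ H) ∧
    Filter.Tendsto s Filter.atTop (@nhds _ t f)}

/-- `H` is separable w.r.t. the topology `t`. -/
def SeparableIn {X : Type*} (t : TopologicalSpace (X → ℝ)) (H : Set (X → ℝ)) : Prop :=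
  ∃ D : Set (X → ℝ), D.Countable ∧ D ∈ DFam t H

/-- `H` is sequentially separable w.r.t. the topology `t`. -/
def SeqSeparableIn {X : Type*} (t : TopologicalSpace (X → ℝ)) (H : Set (X → ℝ)) : Prop :=
  ∃ D : Set (X → ℝ), D.Countable ∧ D ∈ SFam t H

/-- Property `(𝒪_h)`. -/
def PropO {X : Type*} (F : Set (X → ℝ)) (h : X → ℝ) : Prop :=
  ∀ x : X, h x ∈ closure {y : ℝ | ∃ f ∈ F, f x = y}

/-- Property `(Ω_h)_𝓑`. -/
def PropOmega {X : Type*} (𝓑 : Set (Set X)) (F : Set (X → ℝ)) (h : X → ℝ) : Prop :=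
  h ∉ F ∧ h ∈ @closure _ (tauB 𝓑) F

/-- Property `(Γ_h)_𝓑`. -/
def PropGamma {X : Type*} (𝓑 : Set (Set X)) (F : Set (X → ℝ)) (h : X → ℝ) : Prop :=
  F.Infinite ∧ ∀ ε : ℝ, 0 < ε → ∀ B ∈ 𝓑, {f ∈ F | ∃ x ∈ B, ε ≤ |f x - h x|}.Finite

/-- `𝒪_{h,𝓑}(H)`. -/
def OFam {X : Type*} (h : X → ℝ) (H : Set (X → ℝ)) : Set (Set (X → ℝ)) :=
  {F | F ⊆ H ∧ PropO F h ∧ ∀ f ∈ F, h ≤ f ∧ f - h ∈ H}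

/-- `Ω_{h,𝓑}(H)`. -/
def OmegaFam {X : Type*} (𝓑 : Set (Set X)) (h : X → ℝ) (H : Set (X → ℝ)) :
    Set (Set (X → ℝ)) :=
  {F | F ⊆ H ∧ PropOmega 𝓑 F h ∧ ∀ f ∈ F, h ≤ f ∧ f - h ∈ H}

/-- `Γ_{h,𝓑}(H)`. -/
def GammaFam {X : Type*} (𝓑 : Set (Set X)) (h : X → ℝ) (H : Set (X → ℝ)) :
    Set (Set (X → ℝ)) :=
  {F | F ⊆ H ∧ PropGamma 𝓑 F h ∧ ∀ f ∈ F, h ≤ f ∧ f - h ∈ H}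

open Classical in
/-- The function `f_{U,g}`. -/
noncomputable def fUg {X : Type*} (U : Set X) (g : X → ℝ) : X → ℝ :=
  fun x => if x ∈ U then g x else g x + 1 + ⨆ y, |g y|

/-- The family `S(𝒰)`. -/
def SU {X : Type*} [TopologicalSpace X] (𝒰 : Set (Set X)) : Set (X → ℝ) :=
  {f | ∃ U ∈ 𝒰, ∃ g ∈ USCb X, f = fUg U g}

/-- `Ψ_𝓑(X)` for `Ψ = 𝒪, Ω, Γ` coded by `0, 1, 2 : Fin 3`. -/
def covFam (X : Type*) [TopologicalSpace X] (𝓑 : Set (Set X)) (i : Fin 3) :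
    Set (Set (Set X)) :=
  if i = 0 then OCovers X else if i = 1 then BOmegaCovers 𝓑 else BGammaCovers 𝓑

/-- `Ψ_{h,𝓑}(H)` for `Ψ = 𝒪, Ω, Γ` coded by `0, 1, 2 : Fin 3`. -/
def funFam {X : Type*} (𝓑 : Set (Set X)) (h : X → ℝ) (H : Set (X → ℝ)) (i : Fin 3) :
    Set (Set (X → ℝ)) :=
  if i = 0 then OFam h H else if i = 1 then OmegaFam 𝓑 h H else GammaFam 𝓑 h H

/-- `H` (as a subspace w.r.t. the topology `t`) is Fréchet–Urysohn. -/
def FUOn {X : Type*} (t : TopologicalSpace (X → ℝ)) (H : Set (X → ℝ)) : Prop :=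
  ∀ A : Set (X → ℝ), A ⊆ H → ∀ y ∈ H, y ∈ @closure _ t A →
    ∃ s : ℕ → X → ℝ, (∀ n, s n ∈ A) ∧ Filter.Tendsto s Filter.atTop (@nhds _ t y)

/-- `H` (as a subspace w.r.t. the topology `t`) is strictly Fréchet–Urysohn. -/
def SFUOn {X : Type*} (t : TopologicalSpace (X → ℝ)) (H : Set (X → ℝ)) : Prop :=
  ∀ y ∈ H, ∀ A : ℕ → Set (X → ℝ), (∀ n, A n ⊆ H) → (∀ n, y ∈ @closure _ t (A n)) →
    ∃ s : ℕ → X → ℝ, (∀ n, s n ∈ A n) ∧ Filter.Tendsto s Filter.atTop (@nhds _ t y)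

/-- If `X` is perfectly normal, then every bounded upper semicontinuous
`f : X → ℝ` is the pointwise limit of a non-increasing sequence of bounded continuous
functions; in particular `C*(X)` is sequentially dense in `⟨USC*(X), τ_p⟩`
(the product topology on `ℝ^X` is the default instance). -/

lemma exists_zero_set {X : Type*} [TopologicalSpace X] [PerfectlyNormalSpace X]
    {C : Set X} (hC : IsClosed C) :
    ∃ φ : X → ℝ, Continuous φ ∧ (∀ x, φ x ∈ Icc (0:ℝ) 1) ∧ ∀ x, φ x = 0 ↔ x ∈ C := by
  obtain ⟨U, U_open, hU⟩ := (PerfectlyNormalSpace.closed_gdelta hC).eq_iInter_nat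
  have A : ∀ n, ∃ f : C(X, ℝ), EqOn f 0 C ∧ EqOn f 1 (U n)ᶜ ∧ ∀ x, f x ∈ Icc (0:ℝ) 1 := by
    intro n
    apply exists_continuous_zero_one_of_isClosed hC (U_open n).isClosed_compl
    rw [disjoint_compl_right_iff_subset]
    exact hU.subset.trans (iInter_subset U n)
  choose f fC fU f_range using A
  set u : ℕ → ℝ := fun n => 1/2/2^n with hu
  have u_pos : ∀ n, 0 < u n := fun n => by positivity
  have u_sum : Summable u := summable_geometric_two' 1
  have I : ∀ n x, u n * f n x ≤ u n := fun n x =>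
    mul_le_of_le_one_right (u_pos n).le (f_range n x).2
  have nonneg : ∀ n x, 0 ≤ u n * f n x := fun n x =>
    mul_nonneg (u_pos n).le (f_range n x).1
  have S : ∀ x, Summable (fun n => u n * f n x) := fun x =>
    Summable.of_nonneg_of_le (fun n => nonneg n x) (fun n => I n x) u_sum
  refine ⟨fun x => ∑' n, u n * f n x, ?_, fun x => ⟨?_, ?_⟩, fun x => ⟨?_, ?_⟩⟩
  · apply continuous_tsum (fun n => continuous_const.mul (f n).continuous) u_sum (fun n x => ?_)
    rw [Real.norm_eq_abs]; change |u n * f n x| ≤ u n; rw [abs_of_nonneg (nonneg n x)]; exact I n x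
  · exact tsum_nonneg (fun n => nonneg n x)
  · calc ∑' n, u n * f n x ≤ ∑' n, u n := Summable.tsum_le_tsum (fun n => I n x) (S x) u_sum
    _ = 1 := tsum_geometric_two' 1
  · intro h0
    by_contra hx
    obtain ⟨n, hn⟩ : ∃ n, x ∉ U n := by
      by_contra h; push_neg at h
      exact hx (hU ▸ mem_iInter.mpr h)
    have h1 : f n x = 1 := fU n hn
    have : u n * f n x ≤ ∑' k, u k * f k x := Summable.le_tsum (S x) n (fun k _ => nonneg k x)
    simp only at h0
    rw [h0, h1, mul_one] at this
    exact absurd this (not_le.mpr (u_pos n))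
  · intro hx
    have : ∀ n, u n * f n x = 0 := fun n => by rw [fC n hx]; simp
    simp [this]

theorem statement15 {X : Type*} [TopologicalSpace X] [PerfectlyNormalSpace X] :
    (∀ f ∈ USCb X, ∃ s : ℕ → X → ℝ, (∀ n, s n ∈ Cb X) ∧ (∀ n, s (n + 1) ≤ s n) ∧
      ∀ x : X, Filter.Tendsto (fun n => s n x) Filter.atTop (nhds (f x))) ∧
    Cb X ∈ SFam (Pi.topologicalSpace : TopologicalSpace (X → ℝ)) (USCb X) := by
  have main : ∀ f ∈ USCb X, ∃ s : ℕ → X → ℝ, (∀ n, s n ∈ Cb X) ∧ (∀ n, s (n + 1) ≤ s n) ∧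
      ∀ x : X, Filter.Tendsto (fun n => s n x) Filter.atTop (nhds (f x)) := by
    rintro f ⟨husc, M, hM⟩
    have hcl : ∀ r : ℚ, IsClosed {x | (r:ℝ) ≤ f x} := by
      intro r
      have : {x | (r:ℝ) ≤ f x} = {x | f x < (r:ℝ)}ᶜ := by
        ext x; simp [not_lt]
      rw [this]
      exact (husc r).isClosed_compl
    choose φ φcont φ01 φ0 using fun r : ℚ => exists_zero_set (hcl r)
    -- the countable family
    set g : ℚ × ℕ → X → ℝ := fun p x => max (p.1 : ℝ) (M - p.2 * φ p.1 x) with hg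
    have gcont : ∀ p, Continuous (g p) := fun p =>
      continuous_const.max (continuous_const.sub (continuous_const.mul (φcont p.1)))
    have gbdd : ∀ p : ℚ × ℕ, ∀ x, |g p x| ≤ |(p.1:ℝ)| + |M| + p.2 := by
      rintro ⟨r, m⟩ x
      rw [abs_le]
      constructor
      · have : (r:ℝ) ≤ g (r,m) x := le_max_left _ _
        have h2 : -|(r:ℝ)| ≤ (r:ℝ) := neg_abs_le _
        nlinarith [abs_nonneg (M:ℝ), (Nat.cast_nonneg m : (0:ℝ) ≤ m)]
      · have h1 : (r:ℝ) ≤ |(r:ℝ)| := le_abs_self _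
        have h2 : M - m * φ r x ≤ M := by
          have := (φ01 r x).1
          nlinarith [(Nat.cast_nonneg m : (0:ℝ) ≤ m)]
        have h3 : M ≤ |M| := le_abs_self _
        have : g (r,m) x ≤ max |(r:ℝ)| |M| := max_le_max (by linarith) (by linarith)
        have h4 : max |(r:ℝ)| |M| ≤ |(r:ℝ)| + |M| := max_le (by simp [abs_nonneg]) (by simp [abs_nonneg])
        have h5 : (0:ℝ) ≤ m := (Nat.cast_nonneg m : (0:ℝ) ≤ m)
        linarith
    have gle : ∀ p : ℚ × ℕ, ∀ x, f x ≤ g p x := by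
      rintro ⟨r, m⟩ x
      by_cases hx : (r:ℝ) ≤ f x
      · have : φ r x = 0 := (φ0 r x).mpr hx
        have : g (r,m) x = max (r:ℝ) M := by simp [hg, this]
        rw [this]
        exact le_trans (abs_le.mp (hM x)).2 (le_max_right _ _)
      · push_neg at hx
        exact le_trans hx.le (le_max_left _ _)
    have gkey : ∀ x : X, ∀ ε : ℝ, 0 < ε → ∃ p : ℚ × ℕ, g p x < f x + ε := by
      intro x ε hε
      obtain ⟨r, hr1, hr2⟩ := exists_rat_btwn (show f x < f x + ε by linarith)
      have hnc : ¬ ((r:ℝ) ≤ f x) := not_le.mpr hr1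
      have hφpos : 0 < φ r x := by
        rcases lt_or_eq_of_le (φ01 r x).1 with h | h
        · exact h
        · exact absurd ((φ0 r x).mp h.symm) hnc
      obtain ⟨m, hm⟩ := exists_nat_ge ((M - r) / φ r x)
      refine ⟨(r, m), ?_⟩
      have : M - m * φ r x ≤ (r:ℝ) := by
        have := (div_le_iff₀ hφpos).mp hm
        linarith
      have : g (r, m) x = (r:ℝ) := max_eq_left this
      rw [this]; exact hr2
    -- enumerate
    have E : ℕ ≃ ℚ × ℕ := (Denumerable.eqv (ℚ × ℕ)).symm
    set e : ℕ → ℚ × ℕ := fun n => E n with he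
    set h : ℕ → X → ℝ := fun k => g (e k) with hh
    -- decreasing sequence of partial minima
    set s : ℕ → X → ℝ := fun n => Nat.rec (h 0) (fun k sk => fun x => min (sk x) (h (k+1) x)) n
      with hs
    have hs0 : s 0 = h 0 := rfl
    have hsS : ∀ n x, s (n+1) x = min (s n x) (h (n+1) x) := fun n x => rfl
    have smem : ∀ n, s n ∈ Cb X := by
      intro n
      induction n with
      | zero => exact ⟨gcont _, ⟨_, gbdd (e 0)⟩⟩
      | succ k ih =>
        obtain ⟨ihc, K, ihb⟩ := ih
        refine ⟨ihc.min (gcont _), K + (|((e (k+1)).1:ℝ)| + |M| + (e (k+1)).2), fun x => ?_⟩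
        rw [hsS]
        rcases min_cases (s k x) (h (k+1) x) with ⟨hmin, _⟩ | ⟨hmin, _⟩ <;> rw [hmin]
        · have := ihb x
          have h2 : (0:ℝ) ≤ |((e (k+1)).1:ℝ)| + |M| + (e (k+1)).2 := by positivity
          linarith
        · have := gbdd (e (k+1)) x
          have h2 : (0:ℝ) ≤ K := le_trans (abs_nonneg _) (ihb x)
          linarith
    have sanit : ∀ n, s (n+1) ≤ s n := fun n x => by rw [hsS]; exact min_le_left _ _
    have sgef : ∀ n x, f x ≤ s n x := by
      intro n
      induction n with
      | zero => exact fun x => gle (e 0) x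
      | succ k ih => intro x; rw [hsS]; exact le_min (ih x) (gle _ x)
    have sleh : ∀ n k, k ≤ n → ∀ x, s n x ≤ h k x := by
      intro n
      induction n with
      | zero => intro k hk x; rw [Nat.le_zero.mp hk]; exact le_of_eq (congrFun hs0 x)
      | succ m ih =>
        intro k hk x
        rw [hsS]
        rcases eq_or_lt_of_le hk with heq | hlt
        · rw [heq]; exact min_le_right _ _
        · exact le_trans (min_le_left _ _) (ih k (Nat.lt_succ_iff.mp hlt) x)
    refine ⟨s, smem, sanit, fun x => ?_⟩
    rw [Metric.tendsto_atTop]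
    intro ε hε
    obtain ⟨p, hp⟩ := gkey x ε hε
    refine ⟨E.symm p, fun n hn => ?_⟩
    have hep : e (E.symm p) = p := E.apply_symm_apply p
    have h1 : s n x ≤ h (E.symm p) x := sleh n _ hn x
    have h2 : h (E.symm p) x = g p x := by simp only [hh, hep]
    have h3 : f x ≤ s n x := sgef n x
    rw [Real.dist_eq, abs_of_nonneg (by linarith)]
    linarith
  refine ⟨main, ?_, ?_⟩
  · rintro q ⟨hc, hb⟩
    exact ⟨fun a => (isOpen_Iio).preimage hc, hb⟩
  · intro hfun hmem
    obtain ⟨s, smem, _, hconv⟩ := main hfun hmem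
    exact ⟨s, smem, tendsto_pi_nhds.mpr hconv⟩
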